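/- Fix an unlabeled index i ∈ {nℓ+1, …, n} (so A_{ii} = −αu), assume λ I_d + (1/n)·X_{−i} A X_{−i}ᵀ is invertible with inverse Q_{−i} and that 1 − (αu/n)·x_iᵀ Q_{−i} x_i ≠ 0 (so Q exists). Define ω = (1/n)·Σ_{j=1}^{nℓ} y_j Q x_j and ω_{−i} = (1/n)·Σ_{j=1}^{nℓ} y_j Q_{−i} x_j. Then the score of the unlabeled point x_i decouples as ωᵀ x_i = ω_{−i}ᵀ x_i / ( 1 − (αu/n)·x_iᵀ Q_{−i} x_i ). -/

import Mathlib

open Matrix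

/-- Decoupling of the score at an unlabeled point. For an unlabeled index `i`
(`A_{ii} = −αu`), with `Q_{−i}` the leave-one-out resolvent, `ω = (1/n)·Σ_{j≤nℓ} y_j Q x_j` and
`ω_{−i} = (1/n)·Σ_{j≤nℓ} y_j Q_{−i} x_j`, the score decouples as
`ωᵀ x_i = ω_{−i}ᵀ x_i / (1 − (αu/n)·x_iᵀ Q_{−i} x_i)`. -/
theorem score_decoupling_unlabeled
    (d nℓ nu : ℕ) (hd : 1 ≤ d) (hnℓ : 1 ≤ nℓ) (hnu : 1 ≤ nu)
    (X : Matrix (Fin d) (Fin (nℓ + nu)) ℝ)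
    (y : Fin nℓ → ℝ) (hy : ∀ j, y j = 1 ∨ y j = -1)
    (αℓ αu lam : ℝ) (hαℓ : 0 ≤ αℓ) (hαu : 0 ≤ αu) (hlam : 0 < lam)
    (A : Matrix (Fin (nℓ + nu)) (Fin (nℓ + nu)) ℝ)
    (hA : A = Matrix.diagonal (fun i : Fin (nℓ + nu) => if (i : ℕ) < nℓ then αℓ else -αu))
    (i : Fin (nℓ + nu)) (hi : nℓ ≤ (i : ℕ))
    (hinv : IsUnit (lam • (1 : Matrix (Fin d) (Fin d) ℝ)
      + ((nℓ + nu : ℕ) : ℝ)⁻¹ • (X.updateCol i 0 * A * (X.updateCol i 0)ᵀ)))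
    (Qmi : Matrix (Fin d) (Fin d) ℝ)
    (hQmi : Qmi = (lam • (1 : Matrix (Fin d) (Fin d) ℝ)
      + ((nℓ + nu : ℕ) : ℝ)⁻¹ • (X.updateCol i 0 * A * (X.updateCol i 0)ᵀ))⁻¹)
    (Q : Matrix (Fin d) (Fin d) ℝ)
    (hQ : Q = (lam • (1 : Matrix (Fin d) (Fin d) ℝ)
      + ((nℓ + nu : ℕ) : ℝ)⁻¹ • (X * A * Xᵀ))⁻¹)
    (xi : Fin d → ℝ) (hxi : xi = fun r => X r i)
    (hden : 1 - (αu / ((nℓ + nu : ℕ) : ℝ)) * (xi ⬝ᵥ Qmi.mulVec xi) ≠ 0)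
    (ω ωmi : Fin d → ℝ)
    (hω : ω = ((nℓ + nu : ℕ) : ℝ)⁻¹ •
      ∑ j : Fin nℓ, y j • Q.mulVec (fun r => X r (Fin.castAdd nu j)))
    (hωmi : ωmi = ((nℓ + nu : ℕ) : ℝ)⁻¹ •
      ∑ j : Fin nℓ, y j • Qmi.mulVec (fun r => X r (Fin.castAdd nu j))) :
    ω ⬝ᵥ xi
      = (ωmi ⬝ᵥ xi) / (1 - (αu / ((nℓ + nu : ℕ) : ℝ)) * (xi ⬝ᵥ Qmi.mulVec xi)) := by
  set c : ℝ := ((nℓ + nu : ℕ) : ℝ)⁻¹ with hc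
  set a : ℝ := αu / ((nℓ + nu : ℕ) : ℝ) with ha
  set s : ℝ := xi ⬝ᵥ Qmi.mulVec xi with hs
  set δ : ℝ := 1 - a * s with hδ
  set O : Matrix (Fin d) (Fin d) ℝ := vecMulVec xi xi with hO
  set Mm : Matrix (Fin d) (Fin d) ℝ := lam • (1 : Matrix (Fin d) (Fin d) ℝ)
      + c • (X.updateCol i 0 * A * (X.updateCol i 0)ᵀ) with hMm
  -- rank-one decomposition
  have hXA : X * A * Xᵀ = X.updateCol i 0 * A * (X.updateCol i 0)ᵀ + (-αu) • O := by
    have key : ∀ (Y : Matrix (Fin d) (Fin (nℓ + nu)) ℝ) (r t : Fin d),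
        (Y * A * Yᵀ) r t = ∑ k, Y r k * (if (k : ℕ) < nℓ then αℓ else -αu) * Y t k := by
      intro Y r t
      rw [hA, Matrix.mul_apply]
      simp [Matrix.mul_diagonal]
    ext r t
    simp only [Matrix.add_apply, Matrix.smul_apply, hO, vecMulVec_apply, smul_eq_mul, hxi, key]
    rw [← Finset.sum_erase_add _ _ (Finset.mem_univ i), ← Finset.sum_erase_add _ _ (Finset.mem_univ i)]
    have h1 : ∀ k ∈ Finset.univ.erase i,
        X r k * (if (k : ℕ) < nℓ then αℓ else -αu) * X t k
          = X.updateCol i 0 r k * (if (k : ℕ) < nℓ then αℓ else -αu) * X.updateCol i 0 t k := by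
      intro k hk
      rw [Matrix.updateCol_ne (Finset.ne_of_mem_erase hk),
        Matrix.updateCol_ne (Finset.ne_of_mem_erase hk)]
    rw [Finset.sum_congr rfl h1]
    simp [Matrix.updateCol_self, Nat.not_lt.mpr hi]
    ring
  have hM : lam • (1 : Matrix (Fin d) (Fin d) ℝ) + c • (X * A * Xᵀ) = Mm - a • O := by
    rw [hXA, smul_add, smul_smul, hMm]
    have h3 : c * (-αu) = -a := by rw [ha, hc]; ring
    rw [h3, neg_smul]; abel
  -- inverse facts
  have hdet : IsUnit Mm.det := (Matrix.isUnit_iff_isUnit_det _).mp hinv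
  have hQmi' : Qmi = Mm⁻¹ := hQmi
  have hMQ : Mm * Qmi = 1 := by rw [hQmi']; exact Matrix.mul_nonsing_inv _ hdet
  -- outer product facts
  have hOmv : ∀ w : Fin d → ℝ, O.mulVec w = (xi ⬝ᵥ w) • xi := by
    intro w
    ext r
    simp only [hO, vecMulVec_apply, Matrix.mulVec, dotProduct, Pi.smul_apply, smul_eq_mul,
      Finset.sum_mul, Finset.mul_sum]
    exact Finset.sum_congr rfl fun x _ => by ring
  have hOQO : O * Qmi * O = s • O := by
    ext r t
    simp only [hO, hs, Matrix.mul_apply, vecMulVec_apply, dotProduct, Matrix.mulVec,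
      Matrix.smul_apply, smul_eq_mul, Finset.sum_mul, Finset.mul_sum]
    rw [Finset.sum_comm]
    refine Finset.sum_congr rfl fun k _ => Finset.sum_congr rfl fun l _ => by ring
  -- the explicit inverse
  set N : Matrix (Fin d) (Fin d) ℝ := Qmi + (a / δ) • (Qmi * O * Qmi) with hN
  have hMN : (Mm - a • O) * N = 1 := by
    have h1 : Mm * (Qmi * O * Qmi) = O * Qmi := by
      rw [← Matrix.mul_assoc, ← Matrix.mul_assoc, hMQ, Matrix.one_mul]
    have h2 : O * (Qmi * O * Qmi) = s • (O * Qmi) := by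
      rw [← Matrix.mul_assoc, ← Matrix.mul_assoc, hOQO, Matrix.smul_mul]
    have hcoef : a / δ - (a + a * (a / δ * s)) = 0 := by
      have hδ0 : δ ≠ 0 := hden
      field_simp
      rw [hδ]; ring
    calc (Mm - a • O) * N
        = 1 + (a / δ - (a + a * (a / δ * s))) • (O * Qmi) := by
          simp only [hN, Matrix.sub_mul, Matrix.mul_add, Matrix.mul_smul, Matrix.smul_mul,
            h1, h2, hMQ, smul_smul, sub_smul, add_smul]
          module
      _ = 1 := by rw [hcoef, zero_smul, add_zero]
  have hQN : Q = N := by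
    rw [hQ, hM, Matrix.inv_eq_right_inv hMN]
  -- scalar decoupling
  have hδ0 : δ ≠ 0 := by rwa [hδ]
  have hkey : ∀ v : Fin d → ℝ, xi ⬝ᵥ Q.mulVec v = (xi ⬝ᵥ Qmi.mulVec v) / δ := by
    intro v
    rw [hQN, hN, Matrix.add_mulVec, Matrix.smul_mulVec, ← Matrix.mulVec_mulVec,
      ← Matrix.mulVec_mulVec, hOmv, Matrix.mulVec_smul]
    rw [dotProduct_add, dotProduct_smul, dotProduct_smul, ← hs]
    field_simp [hδ0]
    rw [hδ] at hδ0 ⊢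
    have hinvδ : (1 - a * s) * (1 - a * s)⁻¹ = 1 := mul_inv_cancel₀ hδ0
    linear_combination (a * s * (xi ⬝ᵥ Qmi *ᵥ v)) * hinvδ
  -- conclude
  have hωd : ∀ (P : Matrix (Fin d) (Fin d) ℝ),
      (c • ∑ j : Fin nℓ, y j • P.mulVec (fun r => X r (Fin.castAdd nu j))) ⬝ᵥ xi
        = c * ∑ j : Fin nℓ, y j * (xi ⬝ᵥ P.mulVec (fun r => X r (Fin.castAdd nu j))) := by
    intro P
    have hsum : ∀ (w : Fin nℓ → Fin d → ℝ), (∑ j, w j) ⬝ᵥ xi = ∑ j, (w j ⬝ᵥ xi) := by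
      intro w
      simp only [dotProduct, Finset.sum_apply, Finset.sum_mul]
      exact Finset.sum_comm
    rw [smul_dotProduct, hsum, smul_eq_mul]
    congr 1
    refine Finset.sum_congr rfl fun j _ => ?_
    rw [smul_dotProduct, smul_eq_mul, dotProduct_comm]
  rw [hω, hωmi, hωd, hωd]
  simp only [hkey]
  have hsum2 : ∑ x : Fin nℓ, y x * ((xi ⬝ᵥ Qmi.mulVec fun r => X r (Fin.castAdd nu x)) / δ)
      = (∑ x : Fin nℓ, y x * (xi ⬝ᵥ Qmi.mulVec fun r => X r (Fin.castAdd nu x))) / δ := by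
    rw [Finset.sum_div]
    exact Finset.sum_congr rfl fun x _ => by ring
  rw [hsum2, mul_div_assoc]
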